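/- Let (X⁺, T) be a transitive locally compact one-sided countable Markov shift and φ a λ-transient potential with summable variations. Then for every two states a, b ∈ S there exist constants 0 < c_{a,b} ≤ C_{a,b} such that c_{a,b} G(1_{[b]}, x | λ) ≤ G(1_{[a]}, x | λ) ≤ C_{a,b} G(1_{[b]}, x | λ) for all x ∈ X⁺, where G(f, x | λ) = Σ_{n≥0} λ⁻ⁿ(L_φⁿ f)(x). -/

import Mathlib

open MeasureTheory ENNReal Filter Topology

variable {S : Type*}

/-- The one-sided topological Markov shift over alphabet `S` with transition relation `Adj`. -/
abbrev MShift (Adj : S → S → Prop) : Type _ :=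
  {x : ℕ → S // ∀ i, Adj (x i) (x (i + 1))}

/-- The left shift map. -/
def shiftMap (Adj : S → S → Prop) (x : MShift Adj) : MShift Adj :=
  ⟨fun i => x.1 (i + 1), fun i => x.2 (i + 1)⟩

/-- The Ruelle (transfer) operator on non-negative functions. -/
noncomputable def Ruelle (Adj : S → S → Prop) (φ : MShift Adj → ℝ)
    (f : MShift Adj → ℝ≥0∞) (x : MShift Adj) : ℝ≥0∞ :=
  ∑' y : {y : MShift Adj // shiftMap Adj y = x}, ENNReal.ofReal (Real.exp (φ y.1)) * f y.1

/-- The Green's function `G(f, x | λ) = Σ_n λ⁻ⁿ (L_φⁿ f)(x)`. -/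
noncomputable def Green (Adj : S → S → Prop) (φ : MShift Adj → ℝ) (lam : ℝ)
    (f : MShift Adj → ℝ≥0∞) (x : MShift Adj) : ℝ≥0∞ :=
  ∑' n : ℕ, ENNReal.ofReal ((lam ^ n)⁻¹) * ((Ruelle Adj φ)^[n] f) x

/-- The cylinder set `[a] = {x : x₀ = a}`. -/
def cylA (Adj : S → S → Prop) (a : S) : Set (MShift Adj) := {x | x.1 0 = a}

/-- Indicator function of the cylinder `[a]`. -/
noncomputable def cylInd (Adj : S → S → Prop) (a : S) : MShift Adj → ℝ≥0∞ :=
  (cylA Adj a).indicator 1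

/-- Topological transitivity: every state can be reached from every state. -/
def TransitiveShift (Adj : S → S → Prop) : Prop :=
  ∀ a b : S, ∃ (n : ℕ) (x : MShift Adj), x.1 0 = a ∧ ((shiftMap Adj)^[n] x).1 0 = b

/-- Local compactness: each state has finitely many followers. -/
def LocFin (Adj : S → S → Prop) : Prop := ∀ a : S, {b : S | Adj a b}.Finite

/-- Set of values `|φ(x) − φ(y)|` over pairs agreeing in their first `m` coordinates. -/
def varSet (Adj : S → S → Prop) (φ : MShift Adj → ℝ) (m : ℕ) : Set ℝ :=
  {r | ∃ x y : MShift Adj, (∀ i < m, x.1 i = y.1 i) ∧ r = |φ x - φ y|}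

/-- The `m`-th variation of `φ`. -/
noncomputable def Var (Adj : S → S → Prop) (φ : MShift Adj → ℝ) (m : ℕ) : ℝ :=
  sSup (varSet Adj φ m)

/-- `φ` has summable variations. -/
def SummableVar (Adj : S → S → Prop) (φ : MShift Adj → ℝ) : Prop :=
  (∀ m, BddAbove (varSet Adj φ m)) ∧ Summable (Var Adj φ)

/-- A non-negative real function viewed as `ℝ≥0∞`-valued. -/
noncomputable def ofR {Adj : S → S → Prop} (f : MShift Adj → ℝ) : MShift Adj → ℝ≥0∞ :=
  fun x => ENNReal.ofReal (f x)

/-- `λ`-transience: the Green's function of every cylinder is finite everywhere. -/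
def Transient (Adj : S → S → Prop) (φ : MShift Adj → ℝ) (lam : ℝ) : Prop :=
  ∀ (a : S) (x : MShift Adj), Green Adj φ lam (cylInd Adj a) x ≠ ⊤

lemma shift_iter_apply (Adj : S → S → Prop) (n : ℕ) (x : MShift Adj) (i : ℕ) :
    ((shiftMap Adj)^[n] x).1 i = x.1 (i + n) := by
  induction n generalizing i with
  | zero => rfl
  | succ n ih =>
    rw [Function.iterate_succ_apply']
    show ((shiftMap Adj)^[n] x).1 (i + 1) = x.1 (i + (n + 1))
    rw [ih (i + 1)]
    exact congrArg x.1 (by omega)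

lemma ruelle_mono (Adj : S → S → Prop) (φ : MShift Adj → ℝ) {f g : MShift Adj → ℝ≥0∞}
    (h : ∀ w, f w ≤ g w) (x : MShift Adj) : Ruelle Adj φ f x ≤ Ruelle Adj φ g x :=
  ENNReal.tsum_le_tsum fun y => mul_le_mul_right (h y.1) _

lemma ruelle_iter_mono (Adj : S → S → Prop) (φ : MShift Adj → ℝ) :
    ∀ (n : ℕ) {f g : MShift Adj → ℝ≥0∞}, (∀ w, f w ≤ g w) → ∀ x : MShift Adj,
      (Ruelle Adj φ)^[n] f x ≤ (Ruelle Adj φ)^[n] g x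
  | 0, _, _, h, x => h x
  | n + 1, f, g, h, x => by
    rw [Function.iterate_succ_apply', Function.iterate_succ_apply']
    exact ruelle_mono Adj φ (fun w => ruelle_iter_mono Adj φ n h w) x

lemma ruelle_const_mul (Adj : S → S → Prop) (φ : MShift Adj → ℝ) (c : ℝ≥0∞)
    (f : MShift Adj → ℝ≥0∞) (x : MShift Adj) :
    Ruelle Adj φ (fun w => c * f w) x = c * Ruelle Adj φ f x := by
  unfold Ruelle
  rw [← ENNReal.tsum_mul_left]
  exact tsum_congr fun y => by ring

lemma ruelle_iter_const_mul (Adj : S → S → Prop) (φ : MShift Adj → ℝ) :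
    ∀ (n : ℕ) (c : ℝ≥0∞) (f : MShift Adj → ℝ≥0∞) (x : MShift Adj),
      (Ruelle Adj φ)^[n] (fun w => c * f w) x = c * (Ruelle Adj φ)^[n] f x
  | 0, _, _, _ => rfl
  | n + 1, c, f, x => by
    rw [Function.iterate_succ_apply, Function.iterate_succ_apply]
    have h : Ruelle Adj φ (fun w => c * f w) = fun w => c * Ruelle Adj φ f w :=
      funext fun w => ruelle_const_mul Adj φ c f w
    rw [h]
    exact ruelle_iter_const_mul Adj φ n c (Ruelle Adj φ f) x

lemma le_ruelle (Adj : S → S → Prop) (φ : MShift Adj → ℝ) (f : MShift Adj → ℝ≥0∞)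
    (x z : MShift Adj) (hz : shiftMap Adj z = x) :
    ENNReal.ofReal (Real.exp (φ z)) * f z ≤ Ruelle Adj φ f x :=
  ENNReal.le_tsum (⟨z, hz⟩ : {y : MShift Adj // shiftMap Adj y = x})

lemma pow_le_ruelle_iter (Adj : S → S → Prop) (φ : MShift Adj → ℝ) (m : ℝ)
    (hm : ∀ w, m ≤ φ w) :
    ∀ (N : ℕ) (f : MShift Adj → ℝ≥0∞) (x z : MShift Adj), (shiftMap Adj)^[N] z = x →
      ENNReal.ofReal (Real.exp m) ^ N * f z ≤ (Ruelle Adj φ)^[N] f x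
  | 0, f, x, z, h => by subst h; simp
  | N + 1, f, x, z, h => by
    rw [Function.iterate_succ_apply'] at h ⊢
    calc ENNReal.ofReal (Real.exp m) ^ (N + 1) * f z
        = ENNReal.ofReal (Real.exp m) * (ENNReal.ofReal (Real.exp m) ^ N * f z) := by ring
      _ ≤ ENNReal.ofReal (Real.exp (φ ((shiftMap Adj)^[N] z)))
            * ((Ruelle Adj φ)^[N] f ((shiftMap Adj)^[N] z)) :=
          mul_le_mul' (ENNReal.ofReal_le_ofReal (Real.exp_le_exp.mpr (hm _)))
            (pow_le_ruelle_iter Adj φ m hm N f _ z rfl)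
      _ ≤ Ruelle Adj φ ((Ruelle Adj φ)^[N] f) x := le_ruelle Adj φ _ x _ h

lemma green_ge (Adj : S → S → Prop) (htrans : TransitiveShift Adj)
    (φ : MShift Adj → ℝ) (hvar : SummableVar Adj φ) (lam : ℝ) (hlam : 0 < lam)
    (a b : S) : ∃ c : ℝ, 0 < c ∧ ∀ x : MShift Adj,
      ENNReal.ofReal c * Green Adj φ lam (cylInd Adj b) x
        ≤ Green Adj φ lam (cylInd Adj a) x := by
  by_cases hne : Nonempty (MShift Adj)
  swap
  · exact ⟨1, one_pos, fun x => absurd ⟨x⟩ hne⟩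
  obtain ⟨x₀⟩ := hne
  set V := sSup (varSet Adj φ 0) with hV
  have hb : ∀ w, φ x₀ - V ≤ φ w := by
    intro w
    have hmem : |φ x₀ - φ w| ∈ varSet Adj φ 0 :=
      ⟨x₀, w, fun i hi => absurd hi (Nat.not_lt_zero i), rfl⟩
    have h1 : |φ x₀ - φ w| ≤ V := le_csSup (hvar.1 0) hmem
    have h2 := (abs_le.mp h1).2
    linarith
  set m := φ x₀ - V with hm
  obtain ⟨N, p, hp0, hpN⟩ := htrans a b
  have hpN' : p.1 N = b := by
    rw [← hpN, shift_iter_apply, Nat.zero_add]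
  rcases Nat.eq_zero_or_pos N with hN | hN
  · have hab : a = b := by subst hN; rw [← hp0, ← hpN']
    subst hab
    exact ⟨1, one_pos, fun x => by rw [ENNReal.ofReal_one, one_mul]⟩
  have step : ∀ y : MShift Adj,
      ENNReal.ofReal (Real.exp m) ^ N * cylInd Adj b y
        ≤ (Ruelle Adj φ)^[N] (cylInd Adj a) y := by
    intro y
    by_cases hy : y.1 0 = b
    · set zf : ℕ → S := fun i => if i < N then p.1 i else y.1 (i - N) with hzf
      have zf_lt : ∀ i, i < N → zf i = p.1 i := fun i hi => if_pos hi
      have zf_ge : ∀ i, N ≤ i → zf i = y.1 (i - N) := fun i hi => if_neg (by omega)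
      have zadj : ∀ i, Adj (zf i) (zf (i + 1)) := by
        intro i
        by_cases hi : i < N
        · have h2 : zf (i + 1) = p.1 (i + 1) := by
            by_cases hi1 : i + 1 < N
            · exact zf_lt _ hi1
            · have hEq : i + 1 = N := by omega
              rw [zf_ge _ (by omega), hEq, Nat.sub_self, hy, ← hpN']
          rw [zf_lt _ hi, h2]
          exact p.2 i
        · rw [zf_ge _ (by omega), zf_ge _ (by omega)]
          have hEq : i + 1 - N = (i - N) + 1 := by omega
          rw [hEq]
          exact y.2 (i - N)
      set z : MShift Adj := ⟨zf, zadj⟩ with hzdef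
      have hz : (shiftMap Adj)^[N] z = y := by
        apply Subtype.ext
        funext i
        rw [shift_iter_apply]
        show zf (i + N) = y.1 i
        rw [zf_ge _ (by omega)]
        exact congrArg y.1 (by omega)
      have hz0 : z.1 0 = a := by
        show zf 0 = a
        rw [zf_lt _ hN, hp0]
      have hza : cylInd Adj a z = 1 := by
        rw [cylInd, Set.indicator_of_mem (show z ∈ cylA Adj a from hz0), Pi.one_apply]
      have hyb : cylInd Adj b y = 1 := by
        simp [cylInd, cylA, hy]
      have := pow_le_ruelle_iter Adj φ m hb N (cylInd Adj a) y z hz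
      rw [hza] at this
      rw [hyb]
      exact this
    · have h0 : cylInd Adj b y = 0 := by
        simp [cylInd, cylA, hy]
      rw [h0, mul_zero]
      exact zero_le
  refine ⟨(lam ^ N)⁻¹ * Real.exp m ^ N, by positivity, fun x => ?_⟩
  have key : ∀ n : ℕ,
      ENNReal.ofReal ((lam ^ N)⁻¹ * Real.exp m ^ N)
          * (ENNReal.ofReal ((lam ^ n)⁻¹) * (Ruelle Adj φ)^[n] (cylInd Adj b) x)
        ≤ ENNReal.ofReal ((lam ^ (n + N))⁻¹) * (Ruelle Adj φ)^[n + N] (cylInd Adj a) x := by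
    intro n
    have e1 : (Ruelle Adj φ)^[n + N] (cylInd Adj a) x
        = (Ruelle Adj φ)^[n] ((Ruelle Adj φ)^[N] (cylInd Adj a)) x := by
      rw [Function.iterate_add_apply]
    have e2 : ENNReal.ofReal (Real.exp m ^ N) * (Ruelle Adj φ)^[n] (cylInd Adj b) x
        ≤ (Ruelle Adj φ)^[n] ((Ruelle Adj φ)^[N] (cylInd Adj a)) x := by
      calc ENNReal.ofReal (Real.exp m ^ N) * (Ruelle Adj φ)^[n] (cylInd Adj b) x
          = (Ruelle Adj φ)^[n]
              (fun w => ENNReal.ofReal (Real.exp m ^ N) * cylInd Adj b w) x :=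
            (ruelle_iter_const_mul Adj φ n _ _ x).symm
        _ ≤ (Ruelle Adj φ)^[n] ((Ruelle Adj φ)^[N] (cylInd Adj a)) x :=
            ruelle_iter_mono Adj φ n (fun w => by
              rw [ENNReal.ofReal_pow (Real.exp_nonneg m)]
              exact step w) x
    have e3 : ((lam ^ (n + N))⁻¹ : ℝ) = (lam ^ N)⁻¹ * (lam ^ n)⁻¹ := by
      rw [pow_add, mul_inv, mul_comm]
    rw [e1, e3, ENNReal.ofReal_mul (by positivity), ENNReal.ofReal_mul (by positivity)]
    have e4 : ENNReal.ofReal (lam ^ N)⁻¹ * ENNReal.ofReal (Real.exp m ^ N)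
          * (ENNReal.ofReal (lam ^ n)⁻¹ * (Ruelle Adj φ)^[n] (cylInd Adj b) x)
        = ENNReal.ofReal (lam ^ N)⁻¹ * ENNReal.ofReal (lam ^ n)⁻¹
          * (ENNReal.ofReal (Real.exp m ^ N) * (Ruelle Adj φ)^[n] (cylInd Adj b) x) := by
      ring
    rw [e4]
    exact mul_le_mul_right e2 _
  calc ENNReal.ofReal ((lam ^ N)⁻¹ * Real.exp m ^ N) * Green Adj φ lam (cylInd Adj b) x
      = ∑' n : ℕ, ENNReal.ofReal ((lam ^ N)⁻¹ * Real.exp m ^ N)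
          * (ENNReal.ofReal ((lam ^ n)⁻¹) * (Ruelle Adj φ)^[n] (cylInd Adj b) x) := by
        rw [Green, ENNReal.tsum_mul_left]
    _ ≤ ∑' n : ℕ, ENNReal.ofReal ((lam ^ (n + N))⁻¹)
          * (Ruelle Adj φ)^[n + N] (cylInd Adj a) x := ENNReal.tsum_le_tsum key
    _ ≤ ∑' n : ℕ, ENNReal.ofReal ((lam ^ n)⁻¹)
          * (Ruelle Adj φ)^[n] (cylInd Adj a) x :=
        ENNReal.summable.tsum_le_tsum_of_inj (· + N) (add_left_injective N) (fun c _ => zero_le)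
          (fun n => le_rfl) ENNReal.summable
    _ = Green Adj φ lam (cylInd Adj a) x := rfl

/-- Comparison of Green's functions of cylinders: for all states `a, b` there are
constants `0 < c ≤ C` with `c G(1_[b], x|λ) ≤ G(1_[a], x|λ) ≤ C G(1_[b], x|λ)`
for all `x`. -/
theorem green_cylinder_comparison [Countable S]
    (Adj : S → S → Prop) (htrans : TransitiveShift Adj) (hloc : LocFin Adj)
    (φ : MShift Adj → ℝ) (hvar : SummableVar Adj φ) (lam : ℝ) (hlam : 0 < lam)
    (htransient : Transient Adj φ lam) :
    ∀ a b : S, ∃ c C : ℝ, 0 < c ∧ c ≤ C ∧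
      ∀ x : MShift Adj,
        ENNReal.ofReal c * Green Adj φ lam (cylInd Adj b) x
            ≤ Green Adj φ lam (cylInd Adj a) x ∧
        Green Adj φ lam (cylInd Adj a) x
            ≤ ENNReal.ofReal C * Green Adj φ lam (cylInd Adj b) x := by
  intro a b
  obtain ⟨c₁, hc₁, h1⟩ := green_ge Adj htrans φ hvar lam hlam a b
  obtain ⟨c₂, hc₂, h2⟩ := green_ge Adj htrans φ hvar lam hlam b a
  refine ⟨min c₁ c₂⁻¹, max c₁ c₂⁻¹, lt_min hc₁ (by positivity), min_le_max, fun x => ?_⟩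
  constructor
  · exact le_trans (mul_le_mul_left (ENNReal.ofReal_le_ofReal (min_le_left _ _)) _) (h1 x)
  · have h0 : ENNReal.ofReal c₂ ≠ 0 := (ENNReal.ofReal_pos.mpr hc₂).ne'
    have htop : ENNReal.ofReal c₂ ≠ ⊤ := ENNReal.ofReal_ne_top
    have hstep : Green Adj φ lam (cylInd Adj a) x
        ≤ ENNReal.ofReal c₂⁻¹ * Green Adj φ lam (cylInd Adj b) x := by
      rw [ENNReal.ofReal_inv_of_pos hc₂]
      calc Green Adj φ lam (cylInd Adj a) x
          = (ENNReal.ofReal c₂)⁻¹ * (ENNReal.ofReal c₂ * Green Adj φ lam (cylInd Adj a) x) := by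
            rw [← mul_assoc, ENNReal.inv_mul_cancel h0 htop, one_mul]
        _ ≤ (ENNReal.ofReal c₂)⁻¹ * Green Adj φ lam (cylInd Adj b) x :=
            mul_le_mul_right (h2 x) _
    exact hstep.trans
      (mul_le_mul_left (ENNReal.ofReal_le_ofReal (le_max_right _ _)) _)
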